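/- Let n ≥ 1 and x ≥ n be integers. In the multi-jeep model with exactly n jeeps (no helpers), for every plan with x tankloads in which every jeep reaches a state with position ≥ d and every jeep is at position 0 in the final state, one has d ≤ 1/2 + (1/2)·Σ_{j=n+1}^{x} 1/j. -/

import Mathlib

/-- A state of the multi-jeep model with `N` jeeps: each jeep's position and
tank content, and a finitely supported function recording the fuel stored in
depots. -/
structure MultiState (N : ℕ) where
  pos : Fin N → ℝ
  tank : Fin N → ℝ
  depot : ℝ →₀ ℝ

/-- Admissible moves of the multi-jeep model: one jeep drives (consuming one
tankload of fuel per unit of distance), or fuel is moved between the tank of a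
jeep and the depot at its position, or between the tanks of two jeeps at the
same position; tank contents stay in `[0,1]` and depots stay nonnegative. -/
inductive MultiStep {N : ℕ} : MultiState N → MultiState N → Prop
  | drive (s : MultiState N) (i : Fin N) (p' : ℝ)
      (h : 0 ≤ s.tank i - |p' - s.pos i|) :
      MultiStep s ⟨Function.update s.pos i p',
        Function.update s.tank i (s.tank i - |p' - s.pos i|), s.depot⟩
  | transferDepot (s : MultiState N) (i : Fin N) (t' : ℝ) (D' : ℝ →₀ ℝ)
      (hcons : t' + D' (s.pos i) = s.tank i + s.depot (s.pos i))
      (ht0 : 0 ≤ t') (ht1 : t' ≤ 1)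
      (hD : ∀ q, 0 ≤ D' q)
      (heq : ∀ q, q ≠ s.pos i → D' q = s.depot q) :
      MultiStep s ⟨s.pos, Function.update s.tank i t', D'⟩
  | transferJeep (s : MultiState N) (i j : Fin N) (hij : i ≠ j)
      (hpos : s.pos i = s.pos j) (ti' tj' : ℝ)
      (hcons : ti' + tj' = s.tank i + s.tank j)
      (hi0 : 0 ≤ ti') (hi1 : ti' ≤ 1) (hj0 : 0 ≤ tj') (hj1 : tj' ≤ 1) :
      MultiStep s ⟨s.pos,
        Function.update (Function.update s.tank i ti') j tj', s.depot⟩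

/-- The initial state of a plan with `x` tankloads: all jeeps at position `0`
with empty tanks, and `x` tankloads of fuel at position `0`. -/
noncomputable def multiInit (N : ℕ) (x : ℝ) : MultiState N :=
  ⟨fun _ => 0, fun _ => 0, Finsupp.single 0 x⟩

namespace JeepAux

noncomputable def seg (p q y : ℝ) : ℝ := max 0 (max p q - max y (min p q))

lemma seg_self (p y : ℝ) : seg p p y = 0 := by
  simp only [seg, max_self, min_self]
  rcases le_total y p with h | h
  · simp [max_eq_right h]
  · have : p - max y p ≤ 0 := by
      have := le_max_left y p; linarith
    simp [max_eq_left this]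

lemma seg_nonneg (p q y : ℝ) : 0 ≤ seg p q y := le_max_left _ _

lemma seg_anti (p q : ℝ) {y y' : ℝ} (h : y ≤ y') : seg p q y' ≤ seg p q y := by
  unfold seg
  apply max_le_max le_rfl
  have : max y (min p q) ≤ max y' (min p q) := max_le_max h le_rfl
  linarith

lemma seg_le_abs (p q y : ℝ) : seg p q y ≤ |q - p| := by
  unfold seg
  rcases le_total p q with h | h
  · rw [abs_of_nonneg (by linarith), max_eq_right h, min_eq_left h]
    have h1 : p ≤ max y p := le_max_right _ _
    rcases le_total 0 (q - max y p) with h2 | h2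
    · rw [max_eq_right h2]; linarith
    · rw [max_eq_left h2]; linarith
  · rw [abs_of_nonpos (by linarith), max_eq_left h, min_eq_right h]
    have h1 : q ≤ max y q := le_max_right _ _
    rcases le_total 0 (p - max y q) with h2 | h2
    · rw [max_eq_right h2]; linarith
    · rw [max_eq_left h2]; linarith

lemma seg_cross {p q a b : ℝ} (hpa : p ≤ a) (hbq : b ≤ q) (hab : a ≤ b) :
    seg p q a - seg p q b = b - a := by
  have hpq : p ≤ q := le_trans hpa (le_trans hab hbq)
  unfold seg
  rw [max_eq_right hpq, min_eq_left hpq, max_eq_left hpa,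
    max_eq_left (le_trans hpa hab)]
  rw [max_eq_right (by linarith), max_eq_right (by linarith)]
  ring

lemma seg_cross' {p q a b : ℝ} (hqa : q ≤ a) (hbp : b ≤ p) (hab : a ≤ b) :
    seg p q a - seg p q b = b - a := by
  have := seg_cross (p := q) (q := p) hqa hbp hab
  simpa [seg, max_comm, min_comm] using this

/-- Fueled region value beyond `y` behaves well wrt a drive from `p` to `p'`:
if the whole segment is right of y ... (used inline later) -/

lemma sum_sub_single {n : ℕ} (g g' : Fin n → ℝ) (i : Fin n)
    (h : ∀ j, j ≠ i → g' j = g j) : (∑ j, g' j) - ∑ j, g j = g' i - g i := by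
  rw [← Finset.sum_sub_distrib]
  rw [Finset.sum_eq_single_of_mem i (Finset.mem_univ i)]
  intro b _ hb
  rw [h b hb]; ring

lemma finsupp_sum_sub (D D' : ℝ →₀ ℝ) (p : ℝ) (h : ∀ q, q ≠ p → D' q = D q)
    (g : ℝ → ℝ → ℝ) (hg : ∀ q, g q 0 = 0) :
    D'.sum g - D.sum g = g p (D' p) - g p (D p) := by
  classical
  set s := D.support ∪ D'.support ∪ {p} with hs
  have hsub : D.support ⊆ s :=
    Finset.Subset.trans Finset.subset_union_left Finset.subset_union_left
  have hsub' : D'.support ⊆ s :=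
    Finset.Subset.trans Finset.subset_union_right Finset.subset_union_left
  rw [Finsupp.sum_of_support_subset D hsub g (fun q _ => hg q),
    Finsupp.sum_of_support_subset D' hsub' g (fun q _ => hg q)]
  rw [← Finset.sum_sub_distrib]
  rw [Finset.sum_eq_single_of_mem p (by simp [hs])]
  intro b _ hb
  rw [h b hb]; ring

lemma seg_le_max0 (p q y : ℝ) : seg p q y ≤ max 0 (max p q - y) := by
  unfold seg
  exact max_le_max le_rfl (by have := le_max_left y (min p q); linarith)

lemma drive_ineq (p p' t y : ℝ) (h0 : 0 ≤ t - |p' - p|) (h1 : t ≤ 1) :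
    (if y < p' then t - |p' - p| else 0) - (if y < p then t else 0) + seg p p' y ≤
      (if p ≤ y ∧ y < p' then (1:ℝ) else 0) := by
  have hs1 := seg_nonneg p p' y
  have hs2 := seg_le_abs p p' y
  have hs3 := seg_le_max0 p p' y
  rcases le_total p p' with hpp | hpp
  · rw [abs_of_nonneg (by linarith)] at h0 hs2 ⊢
    rw [max_eq_right hpp] at hs3
    rcases lt_or_ge y p with hy1 | hy1
    · rw [if_pos (by linarith), if_pos hy1, if_neg (by intro hc; linarith [hc.1])]
      linarith
    · rcases lt_or_ge y p' with hy2 | hy2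
      · rw [if_pos hy2, if_neg (by linarith), if_pos ⟨hy1, hy2⟩]
        have hs4 : max 0 (p' - y) ≤ p' - y := max_le (by linarith) le_rfl
        linarith
      · rw [if_neg (by linarith), if_neg (by linarith), if_neg (by intro hc; linarith [hc.2])]
        have hs4 : max 0 (p' - y) ≤ 0 := max_le le_rfl (by linarith)
        linarith
  · rw [abs_of_nonpos (by linarith)] at h0 hs2 ⊢
    rw [max_eq_left hpp] at hs3
    rcases lt_or_ge y p' with hy1 | hy1
    · rw [if_pos hy1, if_pos (by linarith), if_neg (by intro hc; linarith [hc.1, hc.2])]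
      linarith
    · rcases lt_or_ge y p with hy2 | hy2
      · rw [if_neg (by linarith), if_pos hy2, if_neg (by intro hc; linarith [hc.2])]
        have hs4 : max 0 (p - y) ≤ p - y := max_le (by linarith) le_rfl
        linarith
      · rw [if_neg (by linarith), if_neg (by linarith), if_neg (by intro hc; linarith [hc.2])]
        have hs4 : max 0 (p - y) ≤ 0 := max_le le_rfl (by linarith)
        linarith

lemma sum_sub_pair {n : ℕ} (g g' : Fin n → ℝ) (i j : Fin n) (hij : i ≠ j)
    (h : ∀ m, m ≠ i → m ≠ j → g' m = g m) :
    (∑ m, g' m) - ∑ m, g m = (g' i - g i) + (g' j - g j) := by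
  rw [← Finset.sum_sub_distrib]
  rw [← Finset.sum_subset (Finset.subset_univ ({i, j} : Finset (Fin n)))
      (fun m _ hm => by
        simp only [Finset.mem_insert, Finset.mem_singleton] at hm
        push_neg at hm
        rw [h m hm.1 hm.2]; ring)]
  rw [Finset.sum_pair hij]

def Good {n : ℕ} (s : MultiState n) : Prop :=
  (∀ i, 0 ≤ s.tank i) ∧ (∀ i, s.tank i ≤ 1) ∧ (∀ q, 0 ≤ s.depot q)

lemma good_step {n : ℕ} {s s' : MultiState n} (h : MultiStep s s') (hg : Good s) :
    Good s' := by
  obtain ⟨hg0, hg1, hg2⟩ := hg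
  cases h with
  | drive i p' hfuel =>
    refine ⟨fun m => ?_, fun m => ?_, hg2⟩ <;> dsimp only <;>
      rcases eq_or_ne m i with rfl | hne
    · simpa using hfuel
    · simpa [Function.update_of_ne hne] using hg0 m
    · rw [Function.update_self]
      have := abs_nonneg (p' - s.pos m); linarith [hg1 m]
    · simpa [Function.update_of_ne hne] using hg1 m
  | transferDepot i t' D' hcons ht0 ht1 hD heq =>
    refine ⟨fun m => ?_, fun m => ?_, hD⟩ <;> dsimp only <;>
      rcases eq_or_ne m i with rfl | hne
    · simpa using ht0
    · simpa [Function.update_of_ne hne] using hg0 m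
    · simpa using ht1
    · simpa [Function.update_of_ne hne] using hg1 m
  | transferJeep i j hij hpos ti' tj' hcons hi0 hi1 hj0 hj1 =>
    refine ⟨fun m => ?_, fun m => ?_, hg2⟩ <;> dsimp only <;>
      rcases eq_or_ne m j with rfl | hnej
    · simpa using hj0
    · rcases eq_or_ne m i with rfl | hnei
      · simpa [Function.update_of_ne hnej] using hi0
      · simpa [Function.update_of_ne hnej, Function.update_of_ne hnei] using hg0 m
    · simpa using hj1
    · rcases eq_or_ne m i with rfl | hnei
      · simpa [Function.update_of_ne hnej] using hi1
      · simpa [Function.update_of_ne hnej, Function.update_of_ne hnei] using hg1 m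

noncomputable def dmass (D : ℝ →₀ ℝ) (y : ℝ) : ℝ := D.sum fun q v => if y < q then v else 0

lemma dmass_nonneg {D : ℝ →₀ ℝ} (hD : ∀ q, 0 ≤ D q) (y : ℝ) : 0 ≤ dmass D y := by
  unfold dmass Finsupp.sum
  refine Finset.sum_nonneg fun q _ => ?_
  dsimp only
  split <;> simp [hD q]

lemma dmass_diff (D D' : ℝ →₀ ℝ) (p : ℝ) (h : ∀ q, q ≠ p → D' q = D q) (y : ℝ) :
    dmass D' y - dmass D y = if y < p then D' p - D p else 0 := by
  unfold dmass
  rw [finsupp_sum_sub D D' p h _ (fun q => by simp)]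
  split_ifs <;> ring

noncomputable def region {n : ℕ} (s : MultiState n) (y : ℝ) : ℝ :=
  (∑ i, if y < s.pos i then s.tank i else 0) + dmass s.depot y

lemma region_nonneg {n : ℕ} {s : MultiState n} (hg : Good s) (y : ℝ) :
    0 ≤ region s y := by
  unfold region
  have h1 : (0:ℝ) ≤ ∑ i, if y < s.pos i then s.tank i else 0 :=
    Finset.sum_nonneg fun i _ => by split <;> simp [hg.1 i]
  have h2 := dmass_nonneg hg.2.2 y
  linarith

lemma region_step {n : ℕ} {s s' : MultiState n} (h : MultiStep s s') (hg : Good s) (y : ℝ) :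
    region s' y + ∑ i, seg (s.pos i) (s'.pos i) y ≤
      region s y + ∑ i, (if s.pos i ≤ y ∧ y < s'.pos i then (1:ℝ) else 0) := by
  obtain ⟨hg0, hg1, hg2⟩ := hg
  cases h with
  | drive i p' hfuel =>
    dsimp only
    have hseg : (∑ m, seg (s.pos m) (Function.update s.pos i p' m) y)
        = seg (s.pos i) p' y := by
      rw [Finset.sum_eq_single_of_mem i (Finset.mem_univ i)]
      · rw [Function.update_self]
      · intro b _ hb; rw [Function.update_of_ne hb, seg_self]
    have hind : (∑ m, if s.pos m ≤ y ∧ y < Function.update s.pos i p' m then (1:ℝ) else 0)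
        = (if s.pos i ≤ y ∧ y < p' then (1:ℝ) else 0) := by
      rw [Finset.sum_eq_single_of_mem i (Finset.mem_univ i)]
      · rw [Function.update_self]
      · intro b _ hb
        rw [Function.update_of_ne hb, if_neg (by rintro ⟨h1, h2⟩; linarith)]
    rw [hseg, hind]
    have hreg := sum_sub_single
      (fun m => if y < s.pos m then s.tank m else 0)
      (fun m => if y < Function.update s.pos i p' m then
          Function.update s.tank i (s.tank i - |p' - s.pos i|) m else 0) i
      (fun m hm => by rw [Function.update_of_ne hm, Function.update_of_ne hm])
    simp only [Function.update_self] at hreg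
    have hdi := drive_ineq (s.pos i) p' (s.tank i) y hfuel (hg1 i)
    unfold region
    dsimp only
    linarith [hdi, hreg]
  | transferDepot i t' D' hcons ht0 ht1 hD heq =>
    dsimp only
    have hseg : (∑ m, seg (s.pos m) (s.pos m) y) = 0 := by
      apply Finset.sum_eq_zero; intro m _; exact seg_self _ _
    have hind0 : (0:ℝ) ≤ ∑ m, if s.pos m ≤ y ∧ y < s.pos m then (1:ℝ) else 0 :=
      Finset.sum_nonneg fun m _ => by split <;> norm_num
    rw [hseg]
    have hreg := sum_sub_single
      (fun m => if y < s.pos m then s.tank m else 0)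
      (fun m => if y < s.pos m then Function.update s.tank i t' m else 0) i
      (fun m hm => by rw [Function.update_of_ne hm])
    simp only [Function.update_self] at hreg
    have hdm := dmass_diff s.depot D' (s.pos i) heq y
    unfold region
    dsimp only
    split_ifs at hreg hdm with hy
    · linarith
    · linarith
  | transferJeep i j hij hpos ti' tj' hcons hi0 hi1 hj0 hj1 =>
    dsimp only
    have hseg : (∑ m, seg (s.pos m) (s.pos m) y) = 0 := by
      apply Finset.sum_eq_zero; intro m _; exact seg_self _ _
    have hind0 : (0:ℝ) ≤ ∑ m, if s.pos m ≤ y ∧ y < s.pos m then (1:ℝ) else 0 :=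
      Finset.sum_nonneg fun m _ => by split <;> norm_num
    rw [hseg]
    have hreg := sum_sub_pair
      (fun m => if y < s.pos m then s.tank m else 0)
      (fun m => if y < s.pos m then
          Function.update (Function.update s.tank i ti') j tj' m else 0) i j hij
      (fun m hmi hmj => by
        rw [Function.update_of_ne hmj, Function.update_of_ne hmi])
    simp only [Function.update_self, Function.update_of_ne hij,
      Function.update_self] at hreg
    unfold region
    dsimp only
    rw [hpos] at hreg
    split_ifs at hreg with hy
    · linarith
    · linarith


section Plan

variable {n : ℕ} (x : ℕ) (k : ℕ) (f : ℕ → MultiState n)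

/-- Total driving distance beyond `y` within the first `m` steps. -/
noncomputable def Uf (m : ℕ) (y : ℝ) : ℝ :=
  ∑ j ∈ Finset.range m, ∑ i, seg ((f j).pos i) ((f (j + 1)).pos i) y

open Classical in
/-- Number of rightward crossings of `z` within the first `m` steps. -/
noncomputable def Rn (m : ℕ) (z : ℝ) : ℕ :=
  ∑ j ∈ Finset.range m, ∑ i, if (f j).pos i ≤ z ∧ z < (f (j + 1)).pos i then 1 else 0

lemma Uf_nonneg (m : ℕ) (y : ℝ) : 0 ≤ Uf f m y :=
  Finset.sum_nonneg fun j _ => Finset.sum_nonneg fun i _ => seg_nonneg _ _ _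

lemma Uf_anti (m : ℕ) : Antitone (Uf f m) := fun y y' h =>
  Finset.sum_le_sum fun j _ => Finset.sum_le_sum fun i _ => seg_anti _ _ h

lemma Uf_cont (m : ℕ) : Continuous (Uf f m) := by
  apply continuous_finset_sum
  intro j _
  apply continuous_finset_sum
  intro i _
  unfold seg
  exact continuous_const.max
    (continuous_const.sub (continuous_id.max continuous_const))

variable (hgood0 : Good (f 0)) (hstep : ∀ j < k, MultiStep (f j) (f (j + 1)))

include hgood0 hstep in
lemma good_all : ∀ m ≤ k, Good (f m) := by
  intro m
  induction m with
  | zero => intro _; exact hgood0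
  | succ m ih =>
    intro hm
    exact good_step (hstep m (by omega)) (ih (by omega))

open Classical in
noncomputable def Rf (m : ℕ) (z : ℝ) : ℝ :=
  ∑ j ∈ Finset.range m, ∑ i, if (f j).pos i ≤ z ∧ z < (f (j + 1)).pos i then (1:ℝ) else 0

lemma Rf_eq_cast (m : ℕ) (z : ℝ) : Rf f m z = (Rn f m z : ℝ) := by
  unfold Rf Rn
  push_cast
  apply Finset.sum_congr rfl
  intro j _
  apply Finset.sum_congr rfl
  intro i _
  split_ifs <;> norm_num

include hgood0 hstep in
lemma main_inv (y : ℝ) (hy : region (f 0) y = 0) :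
    ∀ m ≤ k, region (f m) y + Uf f m y ≤ Rf f m y := by
  intro m
  induction m with
  | zero => intro _; simp [Uf, Rf, hy]
  | succ m ih =>
    intro hm
    have h1 := region_step (hstep m (by omega))
      (good_all k f hgood0 hstep m (by omega)) y
    have hU : Uf f (m + 1) y
        = Uf f m y + ∑ i, seg ((f m).pos i) ((f (m + 1)).pos i) y :=
      Finset.sum_range_succ _ _
    have hR : Rf f (m + 1) y
        = Rf f m y + ∑ i, (if (f m).pos i ≤ y ∧ y < (f (m + 1)).pos i then (1:ℝ) else 0) := by
      unfold Rf
      rw [Finset.sum_range_succ]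
    have h2 := ih (by omega)
    rw [hU, hR]
    linarith

noncomputable def TF (s : MultiState n) : ℝ :=
  (∑ i, s.tank i) + s.depot.sum fun _ v => v

lemma TF_nonneg {s : MultiState n} (hg : Good s) : 0 ≤ TF s := by
  unfold TF Finsupp.sum
  have h1 : (0:ℝ) ≤ ∑ i, s.tank i := Finset.sum_nonneg fun i _ => hg.1 i
  have h2 : (0:ℝ) ≤ ∑ q ∈ s.depot.support, s.depot q :=
    Finset.sum_nonneg fun q _ => hg.2.2 q
  linarith

lemma TF_step {s s' : MultiState n} (h : MultiStep s s') :
    TF s' + ∑ i, |s'.pos i - s.pos i| = TF s := by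
  cases h with
  | drive i p' hfuel =>
    dsimp only
    have habs : (∑ m, |Function.update s.pos i p' m - s.pos m|) = |p' - s.pos i| := by
      rw [Finset.sum_eq_single_of_mem i (Finset.mem_univ i)]
      · rw [Function.update_self]
      · intro b _ hb; rw [Function.update_of_ne hb, sub_self, abs_zero]
    have htank := sum_sub_single s.tank
      (Function.update s.tank i (s.tank i - |p' - s.pos i|)) i
      (fun m hm => Function.update_of_ne hm _ _)
    rw [Function.update_self] at htank
    unfold TF
    dsimp only
    rw [habs]
    linarith
  | transferDepot i t' D' hcons ht0 ht1 hD heq =>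
    dsimp only
    have habs : (∑ m, |s.pos m - s.pos m|) = 0 := by
      apply Finset.sum_eq_zero; intro m _; rw [sub_self, abs_zero]
    have htank := sum_sub_single s.tank (Function.update s.tank i t') i
      (fun m hm => Function.update_of_ne hm _ _)
    rw [Function.update_self] at htank
    have hdep := finsupp_sum_sub s.depot D' (s.pos i) heq (fun _ v => v) (fun q => rfl)
    unfold TF
    dsimp only
    rw [habs]
    linarith
  | transferJeep i j hij hpos ti' tj' hcons hi0 hi1 hj0 hj1 =>
    dsimp only
    have habs : (∑ m, |s.pos m - s.pos m|) = 0 := by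
      apply Finset.sum_eq_zero; intro m _; rw [sub_self, abs_zero]
    have htank := sum_sub_pair s.tank
      (Function.update (Function.update s.tank i ti') j tj') i j hij
      (fun m hmi hmj => by rw [Function.update_of_ne hmj, Function.update_of_ne hmi])
    rw [Function.update_self, Function.update_of_ne hij, Function.update_self] at htank
    unfold TF
    dsimp only
    rw [habs]
    linarith

include hgood0 hstep in
lemma Uf_le (y : ℝ) : Uf f k y ≤ TF (f 0) := by
  have key : ∀ m ≤ k,
      TF (f m) + ∑ j ∈ Finset.range m, ∑ i, |(f (j + 1)).pos i - (f j).pos i|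
        = TF (f 0) := by
    intro m
    induction m with
    | zero => intro _; simp
    | succ m ih =>
      intro hm
      have h1 := TF_step (hstep m (by omega))
      rw [Finset.sum_range_succ]
      have h2 := ih (by omega)
      linarith
  have h3 := key k le_rfl
  have h4 : Uf f k y ≤ ∑ j ∈ Finset.range k, ∑ i, |(f (j + 1)).pos i - (f j).pos i| :=
    Finset.sum_le_sum fun j _ => Finset.sum_le_sum fun i _ => seg_le_abs _ _ _
  have h5 : 0 ≤ TF (f k) := TF_nonneg (good_all k f hgood0 hstep k le_rfl)
  linarith

open Classical in
noncomputable def Lnn (m : ℕ) (z : ℝ) : ℕ :=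
  ∑ j ∈ Finset.range m, ∑ i, if (f (j + 1)).pos i ≤ z ∧ z < (f j).pos i then 1 else 0

open Classical in
noncomputable def Lf (m : ℕ) (z : ℝ) : ℝ :=
  ∑ j ∈ Finset.range m, ∑ i, if (f (j + 1)).pos i ≤ z ∧ z < (f j).pos i then (1:ℝ) else 0

lemma Lf_eq_cast (m : ℕ) (z : ℝ) : Lf f m z = (Lnn f m z : ℝ) := by
  unfold Lf Lnn
  push_cast
  apply Finset.sum_congr rfl
  intro j _
  apply Finset.sum_congr rfl
  intro i _
  split_ifs <;> norm_num

open Classical in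
noncomputable def rcnt (i : Fin n) (m : ℕ) (z : ℝ) : ℕ :=
  ∑ j ∈ Finset.range m, if (f j).pos i ≤ z ∧ z < (f (j + 1)).pos i then 1 else 0

open Classical in
noncomputable def lcnt (i : Fin n) (m : ℕ) (z : ℝ) : ℕ :=
  ∑ j ∈ Finset.range m, if (f (j + 1)).pos i ≤ z ∧ z < (f j).pos i then 1 else 0

lemma cross_parity_step (p p' z : ℝ) :
    ((if p ≤ z ∧ z < p' then (1:ℤ) else 0) - (if p' ≤ z ∧ z < p then (1:ℤ) else 0))
      = (if z < p' then 1 else 0) - (if z < p then 1 else 0) := by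
  rcases lt_or_ge z p with hD | hD <;> rcases lt_or_ge z p' with hC | hC
  · rw [if_neg (fun h => absurd h.1 (not_le.mpr hD)),
      if_neg (fun h => absurd h.1 (not_le.mpr hC)), if_pos hC, if_pos hD]
    norm_num
  · rw [if_neg (fun h => absurd h.2 (not_lt.mpr hC)), if_pos ⟨hC, hD⟩,
      if_neg (not_lt.mpr hC), if_pos hD]
  · rw [if_pos ⟨hD, hC⟩, if_neg (fun h => absurd h.2 (not_lt.mpr hD)),
      if_pos hC, if_neg (not_lt.mpr hD)]
  · rw [if_neg (fun h => absurd h.2 (not_lt.mpr hC)),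
      if_neg (fun h => absurd h.2 (not_lt.mpr hD)), if_neg (not_lt.mpr hC),
      if_neg (not_lt.mpr hD)]

lemma parity (i : Fin n) (z : ℝ) : ∀ m, (rcnt f i m z : ℤ) - (lcnt f i m z : ℤ)
    = (if z < (f m).pos i then 1 else 0) - (if z < (f 0).pos i then 1 else 0) := by
  intro m
  induction m with
  | zero => simp [rcnt, lcnt]
  | succ m ih =>
    unfold rcnt lcnt at ih ⊢
    rw [Finset.sum_range_succ, Finset.sum_range_succ]
    push_cast at ih ⊢
    have h2 := cross_parity_step ((f m).pos i) ((f (m + 1)).pos i) z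
    split_ifs at ih h2 ⊢ <;> linarith

lemma rcnt_mono (i : Fin n) (z : ℝ) {m m' : ℕ} (h : m ≤ m') :
    rcnt f i m z ≤ rcnt f i m' z :=
  Finset.sum_le_sum_of_subset (Finset.range_subset_range.mpr h)

lemma rcnt_ge_one (i : Fin n) (z : ℝ) (h00 : ¬ z < (f 0).pos i)
    (hr : ∃ j ≤ k, z < (f j).pos i) : 1 ≤ rcnt f i k z := by
  obtain ⟨j, hj, hzj⟩ := hr
  have h1 := parity f i z j
  rw [if_pos hzj, if_neg h00] at h1
  have h2 : 1 ≤ rcnt f i j z := by omega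
  exact le_trans h2 (rcnt_mono f i z hj)

lemma Rn_eq_sum_rcnt (m : ℕ) (z : ℝ) : Rn f m z = ∑ i, rcnt f i m z := by
  unfold Rn rcnt
  rw [Finset.sum_comm]

lemma Lnn_eq_sum_lcnt (m : ℕ) (z : ℝ) : Lnn f m z = ∑ i, lcnt f i m z := by
  unfold Lnn lcnt
  rw [Finset.sum_comm]

lemma Lnn_eq_Rn (z : ℝ) (h00 : ∀ i, ¬ z < (f 0).pos i)
    (h0k : ∀ i, ¬ z < (f k).pos i) : Lnn f k z = Rn f k z := by
  rw [Rn_eq_sum_rcnt, Lnn_eq_sum_lcnt]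
  apply Finset.sum_congr rfl
  intro i _
  have h1 := parity f i z k
  rw [if_neg (h00 i), if_neg (h0k i)] at h1
  omega

lemma Rn_ge_n (z : ℝ) (h00 : ∀ i, ¬ z < (f 0).pos i)
    (hr : ∀ i, ∃ j ≤ k, z < (f j).pos i) : n ≤ Rn f k z := by
  rw [Rn_eq_sum_rcnt]
  calc n = ∑ _i : Fin n, 1 := by simp
  _ ≤ ∑ i, rcnt f i k z :=
    Finset.sum_le_sum fun i _ => rcnt_ge_one k f i z (h00 i) (hr i)

lemma U_diff_ge (a b z : ℝ) (haz : a < z) (hzb : z < b)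
    (hfree : ∀ j ≤ k, ∀ i, (f j).pos i ∉ Set.Ioo a b)
    (h00 : ∀ i, ¬ z < (f 0).pos i) (h0k : ∀ i, ¬ z < (f k).pos i) :
    2 * (Rn f k z : ℝ) * (b - a) ≤ Uf f k a - Uf f k b := by
  classical
  have hpt : ∀ j ∈ Finset.range k, ∀ i : Fin n,
      (((if (f j).pos i ≤ z ∧ z < (f (j + 1)).pos i then (1:ℝ) else 0)
        + (if (f (j + 1)).pos i ≤ z ∧ z < (f j).pos i then (1:ℝ) else 0)) * (b - a))
        ≤ seg ((f j).pos i) ((f (j + 1)).pos i) a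
          - seg ((f j).pos i) ((f (j + 1)).pos i) b := by
    intro j hj i
    rw [Finset.mem_range] at hj
    set p := (f j).pos i with hp
    set q := (f (j + 1)).pos i with hq
    have hpf : p ∉ Set.Ioo a b := hfree j (by omega) i
    have hqf : q ∉ Set.Ioo a b := hfree (j + 1) (by omega) i
    simp only [Set.mem_Ioo, not_and_or, not_lt] at hpf hqf
    rcases lt_or_ge z q with hc1 | hc1
    · rcases le_or_gt p z with hc2 | hc2
      · -- rightward crossing
        have hpa : p ≤ a := by rcases hpf with h | h; linarith; linarith
        have hbq : b ≤ q := by rcases hqf with h | h; linarith; linarith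
        rw [if_pos ⟨hc2, hc1⟩, if_neg (fun h => absurd h.1 (not_le.mpr hc1)),
          seg_cross hpa hbq (le_of_lt (lt_trans haz hzb))]
        ring_nf
        linarith
      · rw [if_neg (fun h => absurd h.1 (not_le.mpr hc2)),
          if_neg (fun h => absurd h.1 (not_le.mpr hc1))]
        have := seg_anti p q (le_of_lt (lt_trans haz hzb))
        linarith
    · rcases lt_or_ge z p with hc2 | hc2
      · -- leftward crossing
        have hqa : q ≤ a := by rcases hqf with h | h; linarith; linarith
        have hbp : b ≤ p := by rcases hpf with h | h; linarith; linarith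
        rw [if_neg (fun h => absurd h.2 (not_lt.mpr hc1)), if_pos ⟨hc1, hc2⟩,
          seg_cross' hqa hbp (le_of_lt (lt_trans haz hzb))]
        ring_nf
        linarith
      · rw [if_neg (fun h => absurd h.2 (not_lt.mpr hc1)),
          if_neg (fun h => absurd h.2 (not_lt.mpr hc2))]
        have := seg_anti p q (le_of_lt (lt_trans haz hzb))
        linarith
  have hUab : Uf f k a - Uf f k b
      = ∑ j ∈ Finset.range k, ∑ i,
        (seg ((f j).pos i) ((f (j + 1)).pos i) a
          - seg ((f j).pos i) ((f (j + 1)).pos i) b) := by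
    unfold Uf
    rw [← Finset.sum_sub_distrib]
    apply Finset.sum_congr rfl
    intro j _
    rw [← Finset.sum_sub_distrib]
  have h2 : (∑ j ∈ Finset.range k, ∑ i : Fin n,
      ((if (f j).pos i ≤ z ∧ z < (f (j + 1)).pos i then (1:ℝ) else 0)
        + (if (f (j + 1)).pos i ≤ z ∧ z < (f j).pos i then (1:ℝ) else 0))) * (b - a)
      ≤ Uf f k a - Uf f k b := by
    rw [hUab, Finset.sum_mul]
    apply Finset.sum_le_sum
    intro j hj
    rw [Finset.sum_mul]
    exact Finset.sum_le_sum fun i _ => hpt j hj i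
  have h3 : (∑ j ∈ Finset.range k, ∑ i : Fin n,
      ((if (f j).pos i ≤ z ∧ z < (f (j + 1)).pos i then (1:ℝ) else 0)
        + (if (f (j + 1)).pos i ≤ z ∧ z < (f j).pos i then (1:ℝ) else 0)))
      = (Rn f k z : ℝ) + (Lnn f k z : ℝ) := by
    simp only [Finset.sum_add_distrib]
    rw [← Rf_eq_cast, ← Lf_eq_cast]
    rfl
  rw [h3, Lnn_eq_Rn k f z h00 h0k] at h2
  linarith


include hgood0 hstep in
lemma Uf_le_Rn (z : ℝ) (hreg0 : region (f 0) z = 0) : Uf f k z ≤ (Rn f k z : ℝ) := by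
  have h1 := main_inv k f hgood0 hstep z hreg0 k le_rfl
  have h2 : 0 ≤ region (f k) z := region_nonneg (good_all k f hgood0 hstep k le_rfl) z
  rw [Rf_eq_cast] at h1
  linarith

include hgood0 hstep in
lemma local_bound (hn : 1 ≤ n) (d : ℝ)
    (hpos0 : ∀ i, (f 0).pos i = 0) (hposk : ∀ i, (f k).pos i = 0)
    (hreach : ∀ i : Fin n, ∃ j ≤ k, d ≤ (f j).pos i)
    (hreg0 : ∀ z : ℝ, 0 ≤ z → region (f 0) z = 0)
    (a b : ℝ) (h0a : 0 ≤ a) (hab : a < b) (hbd : b ≤ d)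
    (hfree : ∀ j ≤ k, ∀ i, (f j).pos i ∉ Set.Ioo a b) :
    2 * ((max n (⌊Uf f k b⌋₊ + 1) : ℕ) : ℝ) * (b - a) ≤ Uf f k a - Uf f k b := by
  set z := (a + b) / 2 with hz
  set z' := (z + b) / 2 with hz'
  have hza : a < z := by rw [hz]; linarith
  have hzb : z < b := by rw [hz]; linarith
  have hzz' : z < z' := by rw [hz']; linarith
  have hz'b : z' < b := by rw [hz']; linarith
  have h0z : 0 ≤ z := by linarith
  have h0z' : 0 ≤ z' := by linarith
  have h00 : ∀ w : ℝ, 0 ≤ w → ∀ i, ¬ w < (f 0).pos i := by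
    intro w hw i; rw [hpos0 i]; linarith
  have h0k : ∀ w : ℝ, 0 ≤ w → ∀ i, ¬ w < (f k).pos i := by
    intro w hw i; rw [hposk i]; linarith
  have hrch : ∀ w : ℝ, w < b → ∀ i, ∃ j ≤ k, w < (f j).pos i := by
    intro w hw i
    obtain ⟨j, hj, hdj⟩ := hreach i
    exact ⟨j, hj, by linarith⟩
  have hfree' : ∀ j ≤ k, ∀ i, (f j).pos i ∉ Set.Ioo z b := by
    intro j hj i hmem
    exact hfree j hj i ⟨by linarith [hmem.1], hmem.2⟩
  have h1 := U_diff_ge k f z b z' hzz' hz'b hfree' (h00 z' h0z') (h0k z' h0z')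
  have hn1 : (1:ℝ) ≤ (Rn f k z' : ℝ) := by
    exact_mod_cast le_trans hn (Rn_ge_n k f z' (h00 z' h0z') (hrch z' hz'b))
  have hUzb : Uf f k b < Uf f k z := by nlinarith
  have hUzR : Uf f k z ≤ (Rn f k z : ℝ) := Uf_le_Rn k f hgood0 hstep z (hreg0 z h0z)
  have hfl : ⌊Uf f k b⌋₊ + 1 ≤ Rn f k z := by
    have hb0 : (⌊Uf f k b⌋₊ : ℝ) ≤ Uf f k b := Nat.floor_le (Uf_nonneg f k b)
    have hlt : (⌊Uf f k b⌋₊ : ℝ) < ((Rn f k z : ℕ) : ℝ) := by linarith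
    have := Nat.cast_lt.mp hlt
    omega
  have hnz : n ≤ Rn f k z := Rn_ge_n k f z (h00 z h0z) (hrch z hzb)
  have hmax : max n (⌊Uf f k b⌋₊ + 1) ≤ Rn f k z := max_le hnz hfl
  have h2 := U_diff_ge k f a b z hza hzb hfree (h00 z h0z) (h0k z h0z)
  have hcast : ((max n (⌊Uf f k b⌋₊ + 1) : ℕ) : ℝ) ≤ (Rn f k z : ℝ) :=
    Nat.cast_le.mpr hmax
  nlinarith


end Plan

noncomputable def Hh (n c : ℕ) : ℝ := ∑ j ∈ Finset.Icc 1 c, 1 / (2 * ((max n j : ℕ) : ℝ))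

noncomputable def Phi (n : ℕ) (u : ℝ) : ℝ :=
  Hh n ⌊u⌋₊ + (u - ⌊u⌋₊) / (2 * ((max n (⌊u⌋₊ + 1) : ℕ) : ℝ))

lemma max_cast_pos (n c : ℕ) : (0:ℝ) < 2 * ((max n (c + 1) : ℕ) : ℝ) := by
  have : 0 < max n (c + 1) := by omega
  have : (0:ℝ) < ((max n (c + 1) : ℕ) : ℝ) := by exact_mod_cast this
  linarith

lemma Hh_succ (n c : ℕ) : Hh n (c + 1) = Hh n c + 1 / (2 * ((max n (c + 1) : ℕ) : ℝ)) := by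
  unfold Hh
  rw [← Finset.sum_Icc_succ_top (by omega : 1 ≤ c + 1)]

lemma Hh_nonneg (n c : ℕ) : 0 ≤ Hh n c :=
  Finset.sum_nonneg fun j _ => by positivity

lemma Hh_mono (n : ℕ) {c c' : ℕ} (h : c ≤ c') : Hh n c ≤ Hh n c' :=
  Finset.sum_le_sum_of_subset_of_nonneg
    (Finset.Icc_subset_Icc le_rfl h) (fun j _ _ => by positivity)

lemma Phi_nat (n c : ℕ) : Phi n (c : ℝ) = Hh n c := by
  simp [Phi, Nat.floor_natCast]

lemma Phi_nonneg (n : ℕ) {u : ℝ} (h0 : 0 ≤ u) : 0 ≤ Phi n u := by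
  unfold Phi
  have h1 := Hh_nonneg n ⌊u⌋₊
  have h2 : (⌊u⌋₊ : ℝ) ≤ u := Nat.floor_le h0
  have h3 := max_cast_pos n ⌊u⌋₊
  have h4 : 0 ≤ (u - ⌊u⌋₊) / (2 * ((max n (⌊u⌋₊ + 1) : ℕ) : ℝ)) :=
    div_nonneg (by linarith) (by linarith)
  linarith

lemma Phi_cell (n : ℕ) (u' u : ℝ) (h0 : 0 ≤ u') (h1 : u' ≤ u)
    (h2 : u ≤ (⌊u'⌋₊ : ℝ) + 1) :
    Phi n u - Phi n u' = (u - u') / (2 * ((max n (⌊u'⌋₊ + 1) : ℕ) : ℝ)) := by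
  have hpos := max_cast_pos n ⌊u'⌋₊
  rcases lt_or_eq_of_le h2 with hlt | heq
  · have hfl : ⌊u⌋₊ = ⌊u'⌋₊ := by
      have hl : ⌊u'⌋₊ ≤ ⌊u⌋₊ := Nat.floor_le_floor h1
      have hr : ⌊u⌋₊ < ⌊u'⌋₊ + 1 := by
        rw [Nat.floor_lt (le_trans h0 h1)]
        push_cast
        exact hlt
      omega
    unfold Phi
    rw [hfl]
    field_simp
    ring
  · have hu : u = ((⌊u'⌋₊ + 1 : ℕ) : ℝ) := by push_cast; linarith
    rw [hu, Phi_nat, Hh_succ]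
    unfold Phi
    field_simp
    push_cast
    ring

lemma Phi_mono (n : ℕ) {u' u : ℝ} (h0 : 0 ≤ u') (h : u' ≤ u) :
    Phi n u' ≤ Phi n u := by
  rcases le_or_gt u ((⌊u'⌋₊ : ℝ) + 1) with hc | hc
  · have := Phi_cell n u' u h0 h hc
    have hpos := max_cast_pos n ⌊u'⌋₊
    have : 0 ≤ (u - u') / (2 * ((max n (⌊u'⌋₊ + 1) : ℕ) : ℝ)) :=
      div_nonneg (by linarith) (by linarith)
    linarith
  · have h1 : Phi n u' ≤ Phi n ((⌊u'⌋₊ + 1 : ℕ) : ℝ) := by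
      have hle : u' ≤ ((⌊u'⌋₊ + 1 : ℕ) : ℝ) := by
        push_cast
        linarith [Nat.lt_floor_add_one u']
      have := Phi_cell n u' ((⌊u'⌋₊ + 1 : ℕ) : ℝ) h0 hle (by push_cast; linarith)
      have hpos := max_cast_pos n ⌊u'⌋₊
      have h2 : 0 ≤ (((⌊u'⌋₊ + 1 : ℕ) : ℝ) - u') / (2 * ((max n (⌊u'⌋₊ + 1) : ℕ) : ℝ)) :=
        div_nonneg (by push_cast; linarith [Nat.lt_floor_add_one u']) (by linarith)
      linarith
    have h2 : Hh n (⌊u'⌋₊ + 1) ≤ Hh n ⌊u⌋₊ := by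
      apply Hh_mono
      have : ((⌊u'⌋₊ + 1 : ℕ) : ℝ) ≤ u := by push_cast at hc ⊢; linarith
      have := Nat.le_floor this
      omega
    have h3 : Hh n ⌊u⌋₊ ≤ Phi n u := by
      unfold Phi
      have hpos := max_cast_pos n ⌊u⌋₊
      have h4 : (⌊u⌋₊ : ℝ) ≤ u := Nat.floor_le (le_trans h0 h)
      have : 0 ≤ (u - ⌊u⌋₊) / (2 * ((max n (⌊u⌋₊ + 1) : ℕ) : ℝ)) :=
        div_nonneg (by linarith) (by linarith)
      linarith
    rw [Phi_nat] at h1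
    linarith

lemma step_key (n : ℕ) (N : ℕ) : ∀ (U : ℝ → ℝ) (a b : ℝ), a ≤ b → 0 ≤ U b →
    Antitone U → Continuous U →
    (∀ y y', a ≤ y → y < y' → y' ≤ b →
      2 * ((max n (⌊U y'⌋₊ + 1) : ℕ) : ℝ) * (y' - y) ≤ U y - U y') →
    ⌊U a⌋₊ ≤ ⌊U b⌋₊ + N →
    b - a ≤ Phi n (U a) - Phi n (U b) := by
  induction N with
  | zero =>
    intro U a b hab hUb hanti hcont hdag hfl
    have hUab : U b ≤ U a := hanti hab
    have hflo : ⌊U b⌋₊ ≤ ⌊U a⌋₊ := Nat.floor_le_floor hUab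
    have hfleq : ⌊U a⌋₊ = ⌊U b⌋₊ := by omega
    have hcell := Phi_cell n (U b) (U a) hUb hUab
      (by rw [← hfleq]; linarith [Nat.lt_floor_add_one (U a)])
    rw [hcell]
    have hpos := max_cast_pos n ⌊U b⌋₊
    rcases lt_or_eq_of_le hab with hlt | heq
    · have h1 := hdag a b le_rfl hlt le_rfl
      rw [le_div_iff₀ hpos]
      nlinarith
    · subst heq
      simp
  | succ N ih =>
    intro U a b hab hUb hanti hcont hdag hfl
    by_cases hN : ⌊U a⌋₊ ≤ ⌊U b⌋₊ + N
    · exact ih U a b hab hUb hanti hcont hdag hN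
    · have hflab : ⌊U a⌋₊ = ⌊U b⌋₊ + N + 1 := by omega
      have hUab : U b ≤ U a := hanti hab
      have hval : ((⌊U b⌋₊ : ℝ) + 1) ∈ Set.Icc (U b) (U a) := by
        constructor
        · linarith [Nat.lt_floor_add_one (U b)]
        · have h4 : ((⌊U a⌋₊ : ℝ)) ≤ U a := Nat.floor_le (le_trans hUb hUab)
          rw [hflab] at h4
          push_cast at h4
          linarith
      obtain ⟨c, hc, hUc⟩ := intermediate_value_Icc' hab hcont.continuousOn hval
      have hac : a ≤ c := hc.1
      have hcb : c ≤ b := hc.2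
      have hUcb : U b < U c := by
        rw [hUc]; linarith [Nat.lt_floor_add_one (U b)]
      have hcltb : c < b := by
        rcases lt_or_eq_of_le hcb with h | h
        · exact h
        · rw [h] at hUcb; linarith
      have hflc : ⌊U c⌋₊ = ⌊U b⌋₊ + 1 := by
        rw [hUc]
        rw [show ((⌊U b⌋₊ : ℝ) + 1) = ((⌊U b⌋₊ + 1 : ℕ) : ℝ) by push_cast; ring]
        exact Nat.floor_natCast _
      have hpart1 : b - c ≤ Phi n (U c) - Phi n (U b) := by
        have h1 := hdag c b hac hcltb le_rfl
        have hcell := Phi_cell n (U b) (U c) hUb (le_of_lt hUcb) (by rw [hUc])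
        rw [hcell]
        have hpos := max_cast_pos n ⌊U b⌋₊
        rw [le_div_iff₀ hpos]
        nlinarith
      have hpart2 : c - a ≤ Phi n (U a) - Phi n (U c) := by
        apply ih U a c hac (by rw [hUc]; positivity) hanti hcont
          (fun y y' hy hyy hy' => hdag y y' hy hyy (le_trans hy' hcb))
        omega
      linarith


lemma region_init (N : ℕ) (x y : ℝ) (hy : 0 ≤ y) : region (multiInit N x) y = 0 := by
  unfold region multiInit dmass
  dsimp only
  rw [Finsupp.sum_single_index (by simp)]
  simp [not_lt.mpr hy]

lemma TF_init (N : ℕ) (x : ℝ) : TF (multiInit N x) = x := by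
  unfold TF multiInit
  dsimp only
  rw [Finsupp.sum_single_index rfl]
  simp

lemma chain_aux (d : ℝ) (g : ℝ → ℝ) :
    ∀ (l : List ℝ) (hne : l ≠ []),
      l.Chain' (fun a b => b - a ≤ g a - g b) →
      d - l.getLast hne ≤ g (l.getLast hne) →
      d - l.head hne ≤ g (l.head hne) := by
  intro l
  induction l with
  | nil => intro hne; exact absurd rfl hne
  | cons a t ih =>
    intro hne hch hlast
    cases t with
    | nil => simpa using hlast
    | cons b t' =>
      simp only [List.Chain', List.isChain_cons_cons] at hch
      have hne' : b :: t' ≠ [] := by simp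
      have hlast' : d - (b :: t').getLast hne' ≤ g ((b :: t').getLast hne') := by
        simpa [List.getLast_cons hne'] using hlast
      have h1 := ih hne' hch.2 hlast'
      simp only [List.head_cons] at h1 ⊢
      linarith [hch.1]

lemma Hh_eval (n x : ℕ) (hn : 1 ≤ n) (hx : n ≤ x) :
    Hh n x = 1 / 2 + 1 / 2 * ∑ l ∈ Finset.Icc (n + 1) x, 1 / (l : ℝ) := by
  unfold Hh
  have hIcc : Finset.Icc 1 x = Finset.Ioc 0 x := by
    ext j; simp [Nat.lt_iff_add_one_le]
  have hIcc2 : Finset.Icc (n + 1) x = Finset.Ioc n x := by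
    ext j; simp only [Finset.mem_Icc, Finset.mem_Ioc]; omega
  rw [hIcc, ← Finset.sum_Ioc_consecutive _ (Nat.zero_le n) hx]
  have hA : ∑ j ∈ Finset.Ioc 0 n, 1 / (2 * ((max n j : ℕ) : ℝ)) = 1 / 2 := by
    rw [Finset.sum_congr rfl (fun j hj => by
      rw [Nat.max_eq_left (Finset.mem_Ioc.mp hj).2])]
    rw [Finset.sum_const, Nat.card_Ioc]
    have hn0 : (n:ℝ) ≠ 0 := by
      have : 0 < n := hn
      positivity
    simp only [Nat.sub_zero, nsmul_eq_mul]
    field_simp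
  have hB : ∑ j ∈ Finset.Ioc n x, 1 / (2 * ((max n j : ℕ) : ℝ))
      = 1 / 2 * ∑ l ∈ Finset.Icc (n + 1) x, 1 / (l : ℝ) := by
    rw [hIcc2, Finset.mul_sum]
    apply Finset.sum_congr rfl
    intro j hj
    have hj1 : n < j := (Finset.mem_Ioc.mp hj).1
    have hj0 : (j:ℝ) ≠ 0 := by
      have : 0 < j := by omega
      positivity
    rw [Nat.max_eq_right (le_of_lt hj1)]
    field_simp
  rw [hA, hB]
end JeepAux

/-- With exactly `n ≥ 1` jeeps and `x ≥ n` tankloads, for every plan in which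
every jeep reaches a state with position `≥ d` and every jeep is at position
`0` in the final state, one has `d ≤ 1/2 + (1/2)·Σ_{j=n+1}^{x} 1/j`. -/
theorem multi_roundtrip_bound (n x : ℕ) (hn : 1 ≤ n) (hx : n ≤ x)
    (d : ℝ) (k : ℕ) (f : ℕ → MultiState n)
    (h0 : f 0 = multiInit n (x : ℝ))
    (hstep : ∀ j < k, MultiStep (f j) (f (j + 1)))
    (hreach : ∀ i : Fin n, ∃ j ≤ k, d ≤ (f j).pos i)
    (hreturn : ∀ i : Fin n, (f k).pos i = 0) :
    d ≤ 1 / 2 + 1 / 2 * ∑ l ∈ Finset.Icc (n + 1) x, 1 / (l : ℝ) := by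
  classical
  open JeepAux in
  have hsum_nonneg : 0 ≤ ∑ l ∈ Finset.Icc (n + 1) x, 1 / (l : ℝ) :=
    Finset.sum_nonneg fun l _ => by positivity
  by_cases hd : d ≤ 0
  · linarith
  push_neg at hd
  have hgood0 : Good (f 0) := by
    rw [h0]
    refine ⟨fun i => le_rfl, fun i => zero_le_one, fun q => ?_⟩
    unfold multiInit
    dsimp only
    rw [Finsupp.single_apply]
    split <;> positivity
  have hpos0 : ∀ i, (f 0).pos i = 0 := fun i => by rw [h0]; rfl
  have hreg0 : ∀ z : ℝ, 0 ≤ z → region (f 0) z = 0 := fun z hz => by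
    rw [h0]; exact region_init n x z hz
  have hUx : Uf f k 0 ≤ (x:ℝ) := by
    have h1 := Uf_le k f hgood0 hstep 0
    rw [h0, TF_init] at h1
    exact h1
  set E : Finset ℝ := insert 0 (insert d
    ((Finset.image (fun p : ℕ × Fin n => (f p.1).pos p.2)
      (Finset.range (k + 1) ×ˢ (Finset.univ : Finset (Fin n)))).filter
        fun p => 0 < p ∧ p < d)) with hE
  have hmemE : ∀ p ∈ E, 0 ≤ p ∧ p ≤ d := by
    intro p hp
    rw [hE, Finset.mem_insert, Finset.mem_insert, Finset.mem_filter] at hp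
    rcases hp with rfl | rfl | ⟨_, h1, h2⟩
    · exact ⟨le_rfl, le_of_lt hd⟩
    · exact ⟨le_of_lt hd, le_rfl⟩
    · exact ⟨le_of_lt h1, le_of_lt h2⟩
  have hposE : ∀ j ≤ k, ∀ i : Fin n, 0 < (f j).pos i → (f j).pos i < d → (f j).pos i ∈ E := by
    intro j hj i h1 h2
    rw [hE, Finset.mem_insert, Finset.mem_insert, Finset.mem_filter]
    refine Or.inr (Or.inr ⟨?_, h1, h2⟩)
    exact Finset.mem_image.mpr ⟨(j, i), by
      simp [Finset.mem_product, Finset.mem_range]; omega, rfl⟩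
  have h0E : (0:ℝ) ∈ E := Finset.mem_insert_self _ _
  have hdE : d ∈ E := Finset.mem_insert_of_mem (Finset.mem_insert_self _ _)
  have hEne : E.Nonempty := ⟨0, h0E⟩
  have hLne : E.sort (· ≤ ·) ≠ [] := List.ne_nil_of_mem ((Finset.mem_sort (α := ℝ) (· ≤ ·)).mpr h0E)
  have hlen : 0 < (E.sort (· ≤ ·)).length := List.length_pos_iff.mpr hLne
  have hsorted := (Finset.sortedLT_sort E).pairwise
  have hmin : E.min' hEne = 0 :=
    le_antisymm (Finset.min'_le E 0 h0E) (Finset.le_min' _ _ _ fun p hp => (hmemE p hp).1)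
  have hmax : E.max' hEne = d :=
    le_antisymm (Finset.max'_le _ _ _ fun p hp => (hmemE p hp).2) (Finset.le_max' E d hdE)
  have hhead : (E.sort (· ≤ ·)).head hLne = 0 := by
    rw [List.head_eq_getElem_zero, Finset.sorted_zero_eq_min']
    exact hmin
  have hlast : (E.sort (· ≤ ·)).getLast hLne = d := by
    rw [List.getLast_eq_getElem, Finset.sorted_last_eq_max']
    exact hmax
  have hchain : (E.sort (· ≤ ·)).Chain'
      (fun a b => b - a ≤ Phi n (Uf f k a) - Phi n (Uf f k b)) := by
    simp only [List.Chain']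
    rw [List.isChain_iff_getElem]
    intro t ht
    set a := (E.sort (· ≤ ·)).get ⟨t, by omega⟩ with ha
    set b := (E.sort (· ≤ ·)).get ⟨t + 1, by omega⟩ with hb
    have hab : a < b := hsorted.rel_get_of_lt (by simp)
    have haE : a ∈ E := (Finset.mem_sort (α := ℝ) (· ≤ ·)).mp (List.get_mem _ _)
    have hbE : b ∈ E := (Finset.mem_sort (α := ℝ) (· ≤ ·)).mp (List.get_mem _ _)
    have h0a : 0 ≤ a := (hmemE a haE).1
    have hbd : b ≤ d := (hmemE b hbE).2
    have hfree : ∀ j ≤ k, ∀ i' : Fin n, (f j).pos i' ∉ Set.Ioo a b := by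
      intro j hj i' hmem
      have hpE : (f j).pos i' ∈ E :=
        hposE j hj i' (lt_of_le_of_lt h0a hmem.1) (lt_of_lt_of_le hmem.2 hbd)
      obtain ⟨s, hs⟩ := List.mem_iff_get.mp ((Finset.mem_sort (α := ℝ) (· ≤ ·)).mpr hpE)
      rcases le_or_gt (s : ℕ) t with hst | hst
      · have : (f j).pos i' ≤ a := by
          rcases lt_or_eq_of_le hst with h | h
          · have := hsorted.rel_get_of_lt (a := s) (b := ⟨t, by omega⟩) (Fin.lt_def.mpr h)
            rw [hs] at this
            exact le_of_lt this
          · refine le_of_eq ?_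
            rw [← hs, ha]
            congr 1
            exact Fin.ext h
        linarith [hmem.1]
      · have : b ≤ (f j).pos i' := by
          rcases lt_or_eq_of_le (Nat.succ_le_of_lt hst) with h | h
          · have := hsorted.rel_get_of_lt (a := ⟨t + 1, by omega⟩) (b := s) (Fin.lt_def.mpr h)
            rw [hs] at this
            exact le_of_lt this
          · refine le_of_eq ?_
            rw [← hs, hb]
            congr 1
            exact Fin.ext h
        linarith [hmem.2]
    exact step_key n ⌊Uf f k a⌋₊ (Uf f k) a b hab.le (Uf_nonneg f k b)
      (Uf_anti f k) (Uf_cont f k)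
      (fun y y' hy hyy' hy' => local_bound k f hgood0 hstep hn d hpos0 hreturn hreach hreg0
        y y' (le_trans h0a hy) hyy' (le_trans hy' hbd)
        (fun j hj i' hm => hfree j hj i' ⟨lt_of_le_of_lt hy hm.1, lt_of_lt_of_le hm.2 hy'⟩))
      (by omega)
  have hlastb : d - (E.sort (· ≤ ·)).getLast hLne
      ≤ Phi n (Uf f k ((E.sort (· ≤ ·)).getLast hLne)) := by
    rw [hlast]
    have := Phi_nonneg n (Uf_nonneg f k d)
    linarith
  have hfinal := chain_aux d (fun y => Phi n (Uf f k y)) (E.sort (· ≤ ·)) hLne hchain hlastb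
  rw [hhead] at hfinal
  have h6 : Phi n (Uf f k 0) ≤ Phi n ((x:ℕ):ℝ) :=
    Phi_mono n (Uf_nonneg f k 0) hUx
  rw [Phi_nat, Hh_eval n x hn hx] at h6
  linarith
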